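/- Under the same hypotheses (continuous adjoint ψ across a Rankine–Hugoniot shock Σ, with [ψ]=0 and [∂_tψ]=0), the fourth adjoint equation yields the jump relation (γ−1)[n_x∂_nψ₂ + n_y∂_nψ₃] + γ[v_n ∂_nψ₄] = 0 across Σ. -/
import Mathlib


/-- The 2-D Euler flux Jacobian in the direction `(nx, ny)`:  `An γ u v H nx ny = nx • A + ny • B`,
where `A`, `B` are the Jacobians of the Euler fluxes w.r.t. conservative variables. -/
noncomputable def An (γ u v H nx ny : ℝ) : Matrix (Fin 4) (Fin 4) ℝ :=
  !![0, nx, ny, 0;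
     (γ-1)*((u^2+v^2)/2)*nx - u*(u*nx+v*ny), (u*nx+v*ny)-(γ-2)*u*nx, u*ny-(γ-1)*v*nx, (γ-1)*nx;
     (γ-1)*((u^2+v^2)/2)*ny - v*(u*nx+v*ny), v*nx-(γ-1)*u*ny, (u*nx+v*ny)-(γ-2)*v*ny, (γ-1)*ny;
     ((γ-1)*((u^2+v^2)/2)-H)*(u*nx+v*ny), H*nx-(γ-1)*u*(u*nx+v*ny), H*ny-(γ-1)*v*(u*nx+v*ny), γ*(u*nx+v*ny)]

/- Across a Rankine–Hugoniot shock, with the adjoint ψ and its tangential derivative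
continuous, the fourth adjoint equation yields
(γ−1)[n_x ∂ₙψ₂ + n_y ∂ₙψ₃] + γ[vₙ ∂ₙψ₄] = 0. -/
theorem adjoint_shock_jump_relation_2 (γ H vt nx ny vnp vnm ρp ρm : ℝ)
    (Dnp Dnm Dt : Fin 4 → ℝ)
    (hγ : 1 < γ) (hn : nx^2 + ny^2 = 1)
    (hρp : 0 < ρp) (hρm : 0 < ρm)
    (hmass : ρp * vnp = ρm * vnm)
    (hadjp : (An γ (vnp*nx - vt*ny) (vnp*ny + vt*nx) H nx ny).transpose.mulVec Dnp
           + (An γ (vnp*nx - vt*ny) (vnp*ny + vt*nx) H (-ny) nx).transpose.mulVec Dt = 0)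
    (hadjm : (An γ (vnm*nx - vt*ny) (vnm*ny + vt*nx) H nx ny).transpose.mulVec Dnm
           + (An γ (vnm*nx - vt*ny) (vnm*ny + vt*nx) H (-ny) nx).transpose.mulVec Dt = 0) :
    (γ-1) * ((nx * Dnp 1 + ny * Dnp 2) - (nx * Dnm 1 + ny * Dnm 2))
      + γ * (vnp * Dnp 3 - vnm * Dnm 3) = 0 := by
  have hp := congrFun hadjp 3
  have hm := congrFun hadjm 3
  simp [An, Matrix.mulVec, Matrix.transpose, dotProduct, Fin.sum_univ_four,
    Pi.add_apply] at hp hm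
  linear_combination hp - hm - γ*(vnp*Dnp 3 - vnm*Dnm 3)*hn
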